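/- Let X be a compact topological space with a Radon measure μ and let B be a Banach space. Assume the continuous functions K : X² × B → B and L₁, L₂ : X → ℝ₊ satisfy ‖K(t,s,x) − K(t,s,y)‖ ≤ L₁(t)L₂(s)‖x − y‖ for all t,s ∈ X and x,y ∈ B, and ∫_X L₁(s)L₂(s) dμ(s) < 1. Then for every continuous f : X → B the nonlinear integral equation x(t) = f(t) + ∫_X K(t,s,x(s)) dμ(s) has a unique continuous solution x : X → B. -/

import Mathlib

open MeasureTheory

lemma cont_integrable_aux {X E : Type*} [TopologicalSpace X] [CompactSpace X]
    [MeasurableSpace X] [OpensMeasurableSpace X] {μ : Measure X} [IsFiniteMeasureOnCompacts μ]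
    [NormedAddCommGroup E] {g : X → E} (hg : Continuous g) : Integrable g μ :=
  hg.integrable_of_hasCompactSupport (HasCompactSupport.of_compactSpace g)

/-- Corollary of the Fredholm-type theorem with a product-form Lipschitz modulus: if the
continuous kernel `K : X² × B → B` satisfies `‖K(t,s,x) − K(t,s,y)‖ ≤ L₁(t)L₂(s)‖x − y‖`
with continuous `L₁, L₂ : X → ℝ₊` such that `∫_X L₁(s)L₂(s) dμ(s) < 1`, then for every
continuous `f : X → B` the equation `x(t) = f(t) + ∫_X K(t,s,x(s)) dμ(s)` has a unique
continuous solution. -/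
theorem fredholm_type_unique_solution_product {X : Type*} [TopologicalSpace X] [CompactSpace X]
    [MeasurableSpace X] [BorelSpace X] (μ : Measure X) [μ.Regular]
    {B : Type*} [NormedAddCommGroup B] [NormedSpace ℝ B] [CompleteSpace B]
    (K : X → X → B → B)
    (hK : Continuous (fun p : (X × X) × B => K p.1.1 p.1.2 p.2))
    (L₁ L₂ : X → ℝ) (hL₁cont : Continuous L₁) (hL₂cont : Continuous L₂)
    (hL₁pos : ∀ t : X, 0 < L₁ t) (hL₂pos : ∀ s : X, 0 < L₂ s)
    (hLip : ∀ t s : X, ∀ x y : B, ‖K t s x - K t s y‖ ≤ L₁ t * L₂ s * ‖x - y‖)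
    (hint : (∫ s, L₁ s * L₂ s ∂μ) < 1)
    (f : X → B) (hf : Continuous f) :
    ∃! x : X → B, Continuous x ∧ ∀ t : X, x t = f t + ∫ s, K t s (x s) ∂μ := by
  set r : ℝ := ∫ s, L₁ s * L₂ s ∂μ with hr
  have hr0 : 0 ≤ r := integral_nonneg fun s => mul_nonneg (hL₁pos s).le (hL₂pos s).le
  -- integration as a Lipschitz map on C(X, B)
  have Φlip : LipschitzWith (μ Set.univ).toNNReal (fun g : C(X, B) => ∫ s, g s ∂μ) := by
    apply LipschitzWith.of_dist_le_mul
    intro g h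
    rw [dist_eq_norm, ← integral_sub (cont_integrable_aux g.continuous)
      (cont_integrable_aux h.continuous)]
    calc ‖∫ s, (g s - h s) ∂μ‖ ≤ ∫ s, ‖g s - h s‖ ∂μ := norm_integral_le_integral_norm _
      _ ≤ ∫ _s, dist g h ∂μ := by
          apply integral_mono (cont_integrable_aux (g.continuous.sub h.continuous)).norm
            (integrable_const _)
          intro s
          show ‖g s - h s‖ ≤ dist g h
          rw [← dist_eq_norm]
          exact ContinuousMap.dist_apply_le_dist s
      _ = (μ Set.univ).toReal * dist g h := by rw [integral_const, smul_eq_mul]; rfl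
  -- integrability of kernels
  have intg : ∀ (x : X → B), Continuous x → ∀ t, Integrable (fun s => K t s (x s)) μ := by
    intro x hx t
    exact cont_integrable_aux (hK.comp (by fun_prop : Continuous fun s : X => ((t, s), x s)))
  -- continuity of the parametric integral
  have contI : ∀ (x : X → B), Continuous x → Continuous (fun t => ∫ s, K t s (x s) ∂μ) := by
    intro x hx
    have hG : Continuous fun p : X × X => K p.1 p.2 (x p.2) := by
      have := hK.comp (show Continuous fun p : X × X => ((p.1, p.2), x p.2) by fun_prop)
      exact this
    have h1 : Continuous fun t : X => (ContinuousMap.curry ⟨_, hG⟩) t :=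
      (ContinuousMap.curry (⟨_, hG⟩ : C(X × X, B))).continuous
    exact (Φlip.continuous.comp h1 : _)
  -- the conjugated operator
  set S : C(X, B) → C(X, B) := fun y =>
    ⟨fun t => (L₁ t)⁻¹ • (f t + ∫ s, K t s (L₁ s • y s) ∂μ),
      ((hL₁cont.inv₀ fun t => (hL₁pos t).ne').smul
        (hf.add (contI _ (hL₁cont.smul y.continuous))))⟩ with hS
  have hSapp : ∀ (y : C(X, B)) (t : X),
      S y t = (L₁ t)⁻¹ • (f t + ∫ s, K t s (L₁ s • y s) ∂μ) := fun y t => rfl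
  -- contraction estimate
  have hcon : ∀ y₁ y₂ : C(X, B), dist (S y₁) (S y₂) ≤ r * dist y₁ y₂ := by
    intro y₁ y₂
    rw [ContinuousMap.dist_le (mul_nonneg hr0 dist_nonneg)]
    intro t
    set d : ℝ := dist y₁ y₂ with hd
    have hd0 : 0 ≤ d := dist_nonneg
    have key : ‖(∫ s, K t s (L₁ s • y₁ s) ∂μ) - ∫ s, K t s (L₁ s • y₂ s) ∂μ‖
        ≤ L₁ t * (r * d) := by
      rw [← integral_sub (intg (fun s => L₁ s • y₁ s) (hL₁cont.smul y₁.continuous) t)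
        (intg (fun s => L₁ s • y₂ s) (hL₁cont.smul y₂.continuous) t)]
      calc ‖∫ s, (K t s (L₁ s • y₁ s) - K t s (L₁ s • y₂ s)) ∂μ‖
          ≤ ∫ s, ‖K t s (L₁ s • y₁ s) - K t s (L₁ s • y₂ s)‖ ∂μ :=
            norm_integral_le_integral_norm _
        _ ≤ ∫ s, L₁ t * (L₁ s * L₂ s * d) ∂μ := by
            apply integral_mono
              (cont_integrable_aux ((hK.comp (by fun_prop :
                Continuous fun s : X => ((t, s), L₁ s • y₁ s))).sub
                (hK.comp (by fun_prop : Continuous fun s : X => ((t, s), L₁ s • y₂ s))))).norm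
              (cont_integrable_aux (by fun_prop : Continuous fun s => L₁ t * (L₁ s * L₂ s * d)))
            intro s
            show ‖K t s (L₁ s • y₁ s) - K t s (L₁ s • y₂ s)‖ ≤ L₁ t * (L₁ s * L₂ s * d)
            have h1 := hLip t s (L₁ s • y₁ s) (L₁ s • y₂ s)
            have h2 : ‖L₁ s • y₁ s - L₁ s • y₂ s‖ = L₁ s * ‖y₁ s - y₂ s‖ := by
              rw [← smul_sub, norm_smul, Real.norm_eq_abs, abs_of_pos (hL₁pos s)]
            have h3 : ‖y₁ s - y₂ s‖ ≤ d := by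
              rw [← dist_eq_norm]; exact ContinuousMap.dist_apply_le_dist s
            rw [h2] at h1
            refine h1.trans ?_
            rw [show L₁ t * L₂ s * (L₁ s * ‖y₁ s - y₂ s‖)
                = L₁ t * (L₁ s * L₂ s * ‖y₁ s - y₂ s‖) from by ring]
            exact mul_le_mul_of_nonneg_left (mul_le_mul_of_nonneg_left h3
              (mul_nonneg (hL₁pos s).le (hL₂pos s).le)) (hL₁pos t).le
        _ = L₁ t * (r * d) := by
            rw [integral_const_mul]
            congr 1
            exact integral_mul_const d fun s => L₁ s * L₂ s
    have hdist : dist (S y₁ t) (S y₂ t) ≤ (L₁ t)⁻¹ * (L₁ t * (r * d)) := by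
      rw [hSapp, hSapp, dist_eq_norm, ← smul_sub, norm_smul, Real.norm_eq_abs,
        abs_of_pos (inv_pos.mpr (hL₁pos t)), add_sub_add_left_eq_sub]
      exact mul_le_mul_of_nonneg_left key (inv_pos.mpr (hL₁pos t)).le
    calc dist (S y₁ t) (S y₂ t) ≤ (L₁ t)⁻¹ * (L₁ t * (r * d)) := hdist
      _ = r * d := inv_mul_cancel_left₀ (hL₁pos t).ne' _
  -- contraction
  have hC : ContractingWith ⟨r, hr0⟩ S := by
    constructor
    · exact_mod_cast hint
    · exact LipschitzWith.of_dist_le_mul fun y₁ y₂ => hcon y₁ y₂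
  obtain ⟨y₀, hy₀⟩ : ∃ y : C(X, B), Function.IsFixedPt S y :=
    ⟨hC.fixedPoint S, hC.fixedPoint_isFixedPt⟩
  -- the solution
  refine ⟨fun t => L₁ t • y₀ t, ⟨hL₁cont.smul y₀.continuous, ?_⟩, ?_⟩
  · intro t
    have := congrFun (congrArg DFunLike.coe hy₀) t
    rw [hSapp] at this
    calc L₁ t • y₀ t = L₁ t • ((L₁ t)⁻¹ • (f t + ∫ s, K t s (L₁ s • y₀ s) ∂μ)) := by
          rw [← this]
      _ = f t + ∫ s, K t s (L₁ s • y₀ s) ∂μ := smul_inv_smul₀ (hL₁pos t).ne' _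
  · rintro x ⟨hxc, hx⟩
    set y : C(X, B) := ⟨fun t => (L₁ t)⁻¹ • x t,
      (hL₁cont.inv₀ fun t => (hL₁pos t).ne').smul hxc⟩ with hy
    have hfix : Function.IsFixedPt S y := by
      ext t
      rw [hSapp]
      have : ∀ s, L₁ s • y s = x s := fun s => smul_inv_smul₀ (hL₁pos s).ne' _
      simp only [this]
      rw [← hx t]
      rfl
    have : y = y₀ := by
      rw [hC.fixedPoint_unique hfix, hC.fixedPoint_unique hy₀]
    funext t
    have ht := congrFun (congrArg DFunLike.coe this) t
    calc x t = L₁ t • ((L₁ t)⁻¹ • x t) := (smul_inv_smul₀ (hL₁pos t).ne' _).symm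
      _ = L₁ t • y₀ t := by rw [← ht]; rfl
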